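/- (Claim 14, second part) Let n ≥ 3 and 2 ≤ s ≤ k−1 be integers, and let A ⊆ [k]^n be a compressed set with B_{≥1} ∪ ([s]^n ∩ B_0) ⊊ A ⊆ B_{≥1} ∪ ([s+1]^n ∩ B_0), where [m]^n = {0,…,m−1}^n. For a nonempty X ⊆ {1,…,n} let C_X = {x ∈ [k]^n : m(x) = s, R_s(x) = X, R_0(x) = ∅}, and let T be the largest nonempty subset of {1,…,n} under the binary order with C_T ∩ A ≠ ∅. Suppose T = {j} for some 2 ≤ j ≤ n, and let U = {1,…,j−1}. Then for every nonempty S ⊆ {1,…,n} with S <_bin U we have d(C_S) ⊆ d(A); moreover d(C_U) \ {w_j} ⊆ d(A), where w_j is the point whose coordinates equal s in positions 1,…,j−1, equal 0 in position j, and equal s−1 in positions j+1,…,n. -/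

import Mathlib

open Finset
open scoped Classical

/-- `R_i(x)`: the set of coordinates of `x` equal to `i`.
The ambient alphabet is `[k+1] = {0,…,k}`. -/
noncomputable def rset {k N : ℕ} (x : Fin N → Fin (k + 1)) (i : ℕ) : Finset (Fin N) :=
  Finset.univ.filter fun j => (x j : ℕ) = i

/-- the strict binary order on finite sets of coordinates:
`X <_bin Y` iff `X ≠ Y` and `max (X Δ Y) ∈ Y`. -/
def binLT {N : ℕ} (X Y : Finset (Fin N)) : Prop :=
  ∃ m ∈ Y, m ∉ X ∧ ∀ j : Fin N, ((j ∈ X ∧ j ∉ Y) ∨ (j ∈ Y ∧ j ∉ X)) → j ≤ m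

/-- the strict `≤`-order on `[k+1]^N`: `x < y` iff `|R_0(x)| > |R_0(y)|`, or
`|R_0(x)| = |R_0(y)|` and for the largest `i` with `R_i(x) ≠ R_i(y)` we have
`max (R_i(x) Δ R_i(y)) ∈ R_i(y)`. -/
def plt {k N : ℕ} (x y : Fin N → Fin (k + 1)) : Prop :=
  (rset y 0).card < (rset x 0).card ∨
    ((rset x 0).card = (rset y 0).card ∧
      ∃ i : ℕ, binLT (rset x i) (rset y i) ∧ ∀ j : ℕ, i < j → rset x j = rset y j)

/-- the `≤`-order on `[k+1]^N`. -/
def ple {k N : ℕ} (x y : Fin N → Fin (k + 1)) : Prop := x = y ∨ plt x y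

/-- `B` is an initial segment of the `≤`-order. -/
def isInitSeg {k N : ℕ} (B : Finset (Fin N → Fin (k + 1))) : Prop :=
  ∀ y ∈ B, ∀ x, ple x y → x ∈ B

/-- the `d`-shadow: all points obtained from a point of `A` by flipping one
nonzero coordinate to `0`. -/
noncomputable def dShadow {k N : ℕ} (A : Finset (Fin N → Fin (k + 1))) :
    Finset (Fin N → Fin (k + 1)) :=
  A.biUnion fun x =>
    (Finset.univ.filter fun i => x i ≠ 0).image fun i => Function.update x i 0

/-- the initial segment of the `≤`-order on `[k+1]^N` of cardinality `m`. -/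
noncomputable def initSeg (k N m : ℕ) : Finset (Fin N → Fin (k + 1)) :=
  Finset.univ.filter fun x => (Finset.univ.filter fun y => ple y x).card ≤ m

/-- the `C_s`-compression of `A ⊆ [k+1]^(n+1)`: replace each slice
`A_{s,t} = {y : t_s y ∈ A}` by the initial segment of the same size. -/
noncomputable def compress {k n : ℕ} (s : Fin (n + 1)) (A : Finset (Fin (n + 1) → Fin (k + 1))) :
    Finset (Fin (n + 1) → Fin (k + 1)) :=
  Finset.univ.biUnion fun t : Fin (k + 1) =>
    (initSeg k n
        (Finset.univ.filter fun y : Fin n → Fin (k + 1) => s.insertNth t y ∈ A).card).image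
      fun y => s.insertNth t y

/-- `A` is compressed if every `C_s`-compression fixes it. -/
def IsCompressed {k n : ℕ} (A : Finset (Fin (n + 1) → Fin (k + 1))) : Prop :=
  ∀ s : Fin (n + 1), compress s A = A

/-- `B_r`: points with exactly `r` zero coordinates. -/
noncomputable def Bexact (k N r : ℕ) : Finset (Fin N → Fin (k + 1)) :=
  Finset.univ.filter fun x => (rset x 0).card = r

/-- `B_{≥r}`: points with at least `r` zero coordinates. -/
noncomputable def Bge (k N r : ℕ) : Finset (Fin N → Fin (k + 1)) :=
  Finset.univ.filter fun x => r ≤ (rset x 0).card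

/-- `m(x)`: the largest coordinate value of `x`. -/
noncomputable def mval {k N : ℕ} (x : Fin N → Fin (k + 1)) : ℕ :=
  Finset.univ.sup fun i => (x i : ℕ)

/-- the class `C_X`: points with maximal coordinate `s`, attained exactly on `X`,
and exactly `r` zero coordinates. -/
noncomputable def classSet (k N s r : ℕ) (X : Finset (Fin N)) : Finset (Fin N → Fin (k + 1)) :=
  Finset.univ.filter fun x => mval x = s ∧ rset x s = X ∧ (rset x 0).card = r

/-- `[m]^N = {0,…,m−1}^N`. -/
noncomputable def box (k N m : ℕ) : Finset (Fin N → Fin (k + 1)) :=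
  Finset.univ.filter fun x => ∀ i, (x i : ℕ) < m

/-- `{1,…,s−1}^N`. -/
noncomputable def box1 (k N s : ℕ) : Finset (Fin N → Fin (k + 1)) :=
  Finset.univ.filter fun x => ∀ i, 1 ≤ (x i : ℕ) ∧ (x i : ℕ) ≤ s - 1

/-- `B` is a down-set. -/
def isDownSet {k N : ℕ} (B : Finset (Fin N → Fin (k + 1))) : Prop :=
  ∀ y ∈ B, ∀ x : Fin N → Fin (k + 1), (∀ j, (x j : ℕ) ≤ (y j : ℕ)) → x ∈ B

/-! ### Auxiliary lemmas for Claim 14 (second part) -/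

section Aux

lemma mem_rset {k N : ℕ} {x : Fin N → Fin (k + 1)} {i : ℕ} {q : Fin N} :
    q ∈ rset x i ↔ (x q : ℕ) = i := by simp [rset]

lemma rset_eq_empty_zero {k N : ℕ} (x : Fin N → Fin (k + 1))
    (h : ∀ q, 1 ≤ (x q : ℕ)) : rset x 0 = ∅ := by
  ext q
  simp only [mem_rset, Finset.notMem_empty, iff_false]
  have := h q; omega

lemma rset_eq_empty_high {k N : ℕ} (x : Fin N → Fin (k + 1)) {s i : ℕ}
    (h : ∀ q, (x q : ℕ) ≤ s) (hi : s < i) : rset x i = ∅ := by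
  ext q
  simp only [mem_rset, Finset.notMem_empty, iff_false]
  have := h q; omega

lemma binLT_of_witness {N : ℕ} {X Y : Finset (Fin N)} {m : Fin N}
    (hmY : m ∈ Y) (hmX : m ∉ X) (hb : ∀ q ∈ X, q ∉ Y → q < m) : binLT X Y := by
  classical
  set D := (X \ Y) ∪ (Y \ X) with hD
  have hmD : m ∈ D := by
    rw [hD, Finset.mem_union]
    exact Or.inr (Finset.mem_sdiff.2 ⟨hmY, hmX⟩)
  have hne : D.Nonempty := ⟨m, hmD⟩
  have hMD : D.max' hne ∈ D := D.max'_mem hne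
  have hMY : D.max' hne ∈ Y ∧ D.max' hne ∉ X := by
    rcases Finset.mem_union.1 hMD with h | h
    · rcases Finset.mem_sdiff.1 h with ⟨hX, hY⟩
      exact absurd ((hb _ hX hY).trans_le (D.le_max' m hmD)) (lt_irrefl _)
    · exact ⟨(Finset.mem_sdiff.1 h).1, (Finset.mem_sdiff.1 h).2⟩
  refine ⟨D.max' hne, hMY.1, hMY.2, fun q hq => D.le_max' q ?_⟩
  rcases hq with ⟨h1, h2⟩ | ⟨h1, h2⟩
  · exact Finset.mem_union.2 (Or.inl (Finset.mem_sdiff.2 ⟨h1, h2⟩))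
  · exact Finset.mem_union.2 (Or.inr (Finset.mem_sdiff.2 ⟨h1, h2⟩))

lemma binLT_trans {N : ℕ} {X Y Z : Finset (Fin N)}
    (h1 : binLT X Y) (h2 : binLT Y Z) : binLT X Z := by
  obtain ⟨m1, hm1Y, hm1X, hd1⟩ := h1
  obtain ⟨m2, hm2Z, hm2Y, hd2⟩ := h2
  rcases lt_trichotomy m1 m2 with h | h | h
  · refine binLT_of_witness hm2Z ?_ ?_
    · intro hX
      exact absurd (hd1 _ (Or.inl ⟨hX, hm2Y⟩)) (not_le.2 h)
    · intro q hqX hqZ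
      by_cases hqY : q ∈ Y
      · exact lt_of_le_of_ne (hd2 q (Or.inl ⟨hqY, hqZ⟩))
          (by rintro rfl; exact hm2Y hqY)
      · exact (hd1 q (Or.inl ⟨hqX, hqY⟩)).trans_lt h
  · exact absurd hm1Y (h ▸ hm2Y)
  · have hm1Z : m1 ∈ Z := by
      by_contra hc
      exact absurd (hd2 m1 (Or.inl ⟨hm1Y, hc⟩)) (not_le.2 h)
    refine binLT_of_witness hm1Z hm1X ?_
    intro q hqX hqZ
    by_cases hqY : q ∈ Y
    · exact (hd2 q (Or.inl ⟨hqY, hqZ⟩)).trans_lt h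
    · exact lt_of_le_of_ne (hd1 q (Or.inl ⟨hqX, hqY⟩))
        (by rintro rfl; exact hm1X hqX)

lemma plt_trans {k N : ℕ} {x y z : Fin N → Fin (k + 1)}
    (h1 : plt x y) (h2 : plt y z) : plt x z := by
  rcases h1 with h1 | ⟨hc1, i1, hb1, he1⟩
  · rcases h2 with h2 | ⟨hc2, _⟩
    · exact Or.inl (h2.trans h1)
    · exact Or.inl (by omega)
  · rcases h2 with h2 | ⟨hc2, i2, hb2, he2⟩
    · exact Or.inl (by omega)
    · refine Or.inr ⟨hc1.trans hc2, ?_⟩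
      rcases lt_trichotomy i1 i2 with h | h | h
      · exact ⟨i2, by rw [he1 i2 h]; exact hb2,
          fun l hl => (he1 l (h.trans hl)).trans (he2 l hl)⟩
      · subst h
        exact ⟨i1, binLT_trans hb1 hb2,
          fun l hl => (he1 l hl).trans (he2 l hl)⟩
      · exact ⟨i1, by rw [he2 i1 h] at hb1; exact hb1,
          fun l hl => (he1 l hl).trans (he2 l (h.trans hl))⟩

lemma ple_trans {k N : ℕ} {x y z : Fin N → Fin (k + 1)}
    (h1 : ple x y) (h2 : ple y z) : ple x z := by
  rcases h1 with rfl | h1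
  · exact h2
  · rcases h2 with rfl | h2
    · exact Or.inr h1
    · exact Or.inr (plt_trans h1 h2)

lemma mem_initSeg_of_ple {k N m : ℕ} {x y : Fin N → Fin (k + 1)}
    (hx : x ∈ initSeg k N m) (h : ple y x) : y ∈ initSeg k N m := by
  simp only [initSeg, Finset.mem_filter, Finset.mem_univ, true_and] at hx ⊢
  refine le_trans (Finset.card_le_card ?_) hx
  intro z hz
  simp only [Finset.mem_filter, Finset.mem_univ, true_and] at hz ⊢
  exact ple_trans hz h

lemma slice_eq_initSeg {k n : ℕ} {A : Finset (Fin (n + 1) → Fin (k + 1))}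
    (hA : IsCompressed A) (p : Fin (n + 1)) (t : Fin (k + 1)) :
    (Finset.univ.filter fun y : Fin n → Fin (k + 1) => p.insertNth t y ∈ A)
      = initSeg k n
          (Finset.univ.filter fun y : Fin n → Fin (k + 1) => p.insertNth t y ∈ A).card := by
  classical
  have hinj : Function.Injective
      (fun y : Fin n → Fin (k + 1) => (p.insertNth t y : Fin (n + 1) → Fin (k + 1))) := by
    intro a b h
    have h2 := congrArg (Fin.removeNth p) h
    rwa [Fin.removeNth_insertNth, Fin.removeNth_insertNth] at h2
  have hcomp := hA p
  refine (Finset.image_injective hinj ?_).symm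
  apply Finset.Subset.antisymm
  · intro x hx
    obtain ⟨y, hy, rfl⟩ := Finset.mem_image.1 hx
    have hxA : p.insertNth t y ∈ A := by
      rw [← hcomp]
      exact Finset.mem_biUnion.2 ⟨t, Finset.mem_univ t, Finset.mem_image.2 ⟨y, hy, rfl⟩⟩
    exact Finset.mem_image.2 ⟨y, Finset.mem_filter.2 ⟨Finset.mem_univ _, hxA⟩, rfl⟩
  · intro x hx
    obtain ⟨y, hy, rfl⟩ := Finset.mem_image.1 hx
    have hxA : p.insertNth t y ∈ A := (Finset.mem_filter.1 hy).2
    rw [← hcomp] at hxA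
    obtain ⟨t', _, hx'⟩ := Finset.mem_biUnion.1 hxA
    obtain ⟨y', hy', heq⟩ := Finset.mem_image.1 hx'
    have ht' : t' = t := by
      have h1 := congrFun heq p
      simpa [Fin.insertNth_apply_same] using h1
    subst ht'
    have hy'' : y' = y := hinj heq
    exact Finset.mem_image.2 ⟨y', hy', by rw [hy'']⟩

lemma sliceLe {k n : ℕ} {A : Finset (Fin (n + 1) → Fin (k + 1))} (hA : IsCompressed A)
    (p : Fin (n + 1)) (t : Fin (k + 1)) {u v : Fin n → Fin (k + 1)}
    (hv : p.insertNth t v ∈ A) (hle : ple u v) : p.insertNth t u ∈ A := by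
  classical
  have h := slice_eq_initSeg hA p t
  have hv' : v ∈ (Finset.univ.filter fun y : Fin n → Fin (k + 1) => p.insertNth t y ∈ A) :=
    Finset.mem_filter.2 ⟨Finset.mem_univ _, hv⟩
  rw [h] at hv'
  have hu' := mem_initSeg_of_ple hv' hle
  rw [← h] at hu'
  exact (Finset.mem_filter.1 hu').2

lemma plt_update_lt {k N : ℕ} {z : Fin N → Fin (k + 1)} {i : Fin N} {v : Fin (k + 1)}
    (h1 : 1 ≤ (v : ℕ)) (h2 : (v : ℕ) < (z i : ℕ)) : plt (Function.update z i v) z := by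
  classical
  refine Or.inr ⟨?_, (z i : ℕ), ?_, ?_⟩
  · congr 1
    ext q
    by_cases hq : q = i
    · subst hq
      simp only [mem_rset, Function.update_self]
      omega
    · simp only [mem_rset, Function.update_of_ne hq]
  · refine binLT_of_witness (m := i) (mem_rset.2 rfl) ?_ ?_
    · rw [mem_rset, Function.update_self]
      omega
    · intro q hq hq'
      exfalso
      rw [mem_rset] at hq
      apply hq'
      rw [mem_rset]
      by_cases hqi : q = i
      · subst hqi
        rfl
      · rwa [Function.update_of_ne hqi] at hq
  · intro l hl
    ext q
    by_cases hq : q = i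
    · subst hq
      simp only [mem_rset, Function.update_self]
      omega
    · simp only [mem_rset, Function.update_of_ne hq]

lemma lower_mem {k n : ℕ} {A : Finset (Fin (n + 1) → Fin (k + 1))} (hA : IsCompressed A)
    (hn : 1 ≤ n) {y : Fin (n + 1) → Fin (k + 1)} (hy : y ∈ A) (q : Fin (n + 1))
    (v : Fin (k + 1)) (h1 : 1 ≤ (v : ℕ)) (h2 : (v : ℕ) ≤ (y q : ℕ)) :
    Function.update y q v ∈ A := by
  classical
  rcases eq_or_lt_of_le h2 with heq | hlt
  · have hv : v = y q := Fin.ext heq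
    rw [hv, Function.update_eq_self]
    exact hy
  · have hp : ∃ p : Fin (n + 1), p ≠ q := by
      by_cases h0 : q = 0
      · exact ⟨⟨1, by omega⟩, by subst h0; intro hc; exact absurd (congrArg Fin.val hc) (by simp)⟩
      · exact ⟨0, fun hc => h0 hc.symm⟩
    obtain ⟨p, hp⟩ := hp
    obtain ⟨i, hi⟩ := Fin.exists_succAbove_eq (Ne.symm hp)
    have hq : p.insertNth (y p) (Function.update (p.removeNth y) i v)
        = Function.update y q v := by
      rw [Fin.insertNth_eq_iff]
      constructor
      · exact (Function.update_of_ne hp _ _).symm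
      · funext r
        show Function.update (p.removeNth y) i v r = Function.update y q v (p.succAbove r)
        rcases eq_or_ne r i with rfl | hr
        · rw [Function.update_self, hi, Function.update_self]
        · rw [Function.update_of_ne hr,
            Function.update_of_ne
              (fun hc => hr (Fin.succAbove_right_injective (hc.trans hi.symm)))]
          rfl
    rw [← hq]
    refine sliceLe hA p (y p) ?_ (Or.inr (plt_update_lt h1 ?_))
    · rw [Fin.insertNth_self_removeNth]; exact hy
    · show (v : ℕ) < (y (p.succAbove i) : ℕ)
      rw [hi]; exact hlt

lemma val_one_k {k : ℕ} (hk : 1 ≤ k) : ((1 : Fin (k + 1)) : ℕ) = 1 := by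
  rw [Fin.val_one']
  exact Nat.mod_eq_of_lt (by omega)

/-- Forcing lemma I: any point with values in `[1,s]`, all `s`-positions before `j`,
and value `1` at some position `p ≠ j`, belongs to `A`. -/
lemma forceI {k n s : ℕ} {A : Finset (Fin (n + 1) → Fin (k + 1))} (hA : IsCompressed A)
    (hn : 1 ≤ n) (hs1 : 2 ≤ s) (hs2 : s ≤ k) {j : Fin (n + 1)}
    {a : Fin (n + 1) → Fin (k + 1)} (haA : a ∈ A)
    (haj : (a j : ℕ) = s) (hale : ∀ q, (a q : ℕ) ≤ s) (ha1 : ∀ q, 1 ≤ (a q : ℕ))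
    {y : Fin (n + 1) → Fin (k + 1)} (hy1 : ∀ q, 1 ≤ (y q : ℕ)) (hyle : ∀ q, (y q : ℕ) ≤ s)
    (hycl : ∀ q, (y q : ℕ) = s → q < j) {p : Fin (n + 1)} (hp : p ≠ j)
    (hyp : (y p : ℕ) = 1) : y ∈ A := by
  classical
  have h1k : ((1 : Fin (k + 1)) : ℕ) = 1 := val_one_k (by omega)
  set b := Function.update a p 1 with hbdef
  have hbA : b ∈ A := lower_mem hA hn haA p 1 (by omega) (by rw [h1k]; exact ha1 p)
  have hbval : ∀ q, q ≠ p → b q = a q := fun q hq => Function.update_of_ne hq _ _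
  have hb1 : ∀ q, 1 ≤ (b q : ℕ) := by
    intro q
    rcases eq_or_ne q p with rfl | hq
    · rw [hbdef, Function.update_self]; omega
    · rw [hbval q hq]; exact ha1 q
  have hble : ∀ q, (b q : ℕ) ≤ s := by
    intro q
    rcases eq_or_ne q p with rfl | hq
    · rw [hbdef, Function.update_self]; omega
    · rw [hbval q hq]; exact hale q
  obtain ⟨jr, hjr⟩ := Fin.exists_succAbove_eq (Ne.symm hp)
  have hplt : plt (p.removeNth y) (p.removeNth b) := by
    refine Or.inr ⟨?_, s, ?_, ?_⟩
    · rw [rset_eq_empty_zero (p.removeNth y) (fun q => hy1 _), rset_eq_empty_zero (p.removeNth b) (fun q => hb1 _)]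
    · refine binLT_of_witness (m := jr) ?_ ?_ ?_
      · rw [mem_rset]
        show (b (p.succAbove jr) : ℕ) = s
        rw [hjr, hbval j (Ne.symm hp)]
        exact haj
      · rw [mem_rset]
        show ¬ (y (p.succAbove jr) : ℕ) = s
        rw [hjr]
        intro hc
        exact absurd (hycl j hc) (lt_irrefl j)
      · intro q hqX _
        rw [mem_rset] at hqX
        have hlt : p.succAbove q < j := hycl _ hqX
        rw [← hjr] at hlt
        exact Fin.succAbove_lt_succAbove_iff.1 hlt
    · intro l hl
      rw [rset_eq_empty_high (p.removeNth y) (fun q => hyle _) hl, rset_eq_empty_high (p.removeNth b) (fun q => hble _) hl]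
  have hyy : p.insertNth 1 (p.removeNth y) = y := by
    have h1 : (1 : Fin (k + 1)) = y p := Fin.ext (by rw [h1k, hyp])
    rw [h1, Fin.insertNth_self_removeNth]
  have hbb : p.insertNth 1 (p.removeNth b) = b := by
    have h1 : (1 : Fin (k + 1)) = b p := by rw [hbdef, Function.update_self]
    rw [h1, Fin.insertNth_self_removeNth]
  rw [← hyy]
  exact sliceLe hA p 1 (by rw [hbb]; exact hbA) (Or.inr hplt)

/-- Forcing lemma II: flipping the `j`-coordinate to `1` stays in `A`, given a class
position `qs` and a witness `w` (either `w < j`, or a deficient value at `w`). -/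
lemma forceJ {k n s : ℕ} {A : Finset (Fin (n + 1) → Fin (k + 1))} (hA : IsCompressed A)
    (hn : 1 ≤ n) (hs1 : 2 ≤ s) (hs2 : s ≤ k) {j : Fin (n + 1)}
    {a : Fin (n + 1) → Fin (k + 1)} (haA : a ∈ A)
    (haj : (a j : ℕ) = s) (hale : ∀ q, (a q : ℕ) ≤ s) (ha1 : ∀ q, 1 ≤ (a q : ℕ))
    {x : Fin (n + 1) → Fin (k + 1)} (hx1 : ∀ q, 1 ≤ (x q : ℕ)) (hxle : ∀ q, (x q : ℕ) ≤ s)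
    (hxcl : ∀ q, (x q : ℕ) = s → q < j)
    {qs : Fin (n + 1)} (hqs : (x qs : ℕ) = s)
    {w : Fin (n + 1)} (hw : w ≠ j) (hwS : (x w : ℕ) ≠ s)
    (hwc : w < j ∨ (x w : ℕ) ≤ s - 2) :
    Function.update x j 1 ∈ A := by
  classical
  have h1k : ((1 : Fin (k + 1)) : ℕ) = 1 := val_one_k (by omega)
  set y := Function.update x j 1 with hydef
  have hyj : (y j : ℕ) = 1 := by rw [hydef, Function.update_self, h1k]
  have hyval : ∀ q, q ≠ j → y q = x q := fun q hq => Function.update_of_ne hq _ _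
  have hjx : (x j : ℕ) ≠ s := fun hc => absurd (hxcl j hc) (lt_irrefl j)
  have hy1 : ∀ q, 1 ≤ (y q : ℕ) := by
    intro q
    rcases eq_or_ne q j with rfl | hq
    · omega
    · rw [hyval q hq]; exact hx1 q
  have hyle : ∀ q, (y q : ℕ) ≤ s := by
    intro q
    rcases eq_or_ne q j with rfl | hq
    · omega
    · rw [hyval q hq]; exact hxle q
  have hycl : ∀ q, (y q : ℕ) = s → q < j := by
    intro q hq
    rcases eq_or_ne q j with rfl | hqj
    · omega
    · rw [hyval q hqj] at hq; exact hxcl q hq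
  rcases eq_or_lt_of_le hs1 with hs2' | hs3
  · -- s = 2 : the point y itself has a `1` at position w
    refine forceI hA hn hs1 hs2 haA haj hale ha1 hy1 hyle hycl hw ?_
    rw [hyval w hw]
    have := hxle w
    have := hx1 w
    omega
  · -- s ≥ 3
    have hqsj : qs < j := hxcl qs hqs
    have hqsne : qs ≠ j := ne_of_lt hqsj
    have hqsw : w ≠ qs := fun hc => hwS (hc ▸ hqs)
    have hsk : s - 1 < k + 1 := by omega
    have hs1k : ((Fin.ofNat (k + 1) (s - 1)) : ℕ) = s - 1 := Nat.mod_eq_of_lt hsk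
    set c : Fin (n + 1) → Fin (k + 1) :=
      fun q => if (x q : ℕ) = s then x q else if q = w then 1 else (Fin.ofNat (k + 1) (s - 1))
      with hcdef
    have hcval : ∀ q, (c q : ℕ) =
        if (x q : ℕ) = s then s else if q = w then 1 else s - 1 := by
      intro q
      simp only [hcdef]
      by_cases h1 : (x q : ℕ) = s
      · rw [if_pos h1, if_pos h1]
        exact h1
      · rw [if_neg h1, if_neg h1]
        by_cases h2 : q = w
        · rw [if_pos h2, if_pos h2]
          exact h1k
        · rw [if_neg h2, if_neg h2]
          exact hs1k
    have hcA : c ∈ A := by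
      refine forceI hA hn hs1 hs2 haA haj hale ha1 ?_ ?_ ?_ hw ?_
      · intro q; rw [hcval q]; split <;> [omega; (split <;> omega)]
      · intro q; rw [hcval q]; split <;> [omega; (split <;> omega)]
      · intro q hq
        rw [hcval q] at hq
        by_cases h1 : (x q : ℕ) = s
        · exact hxcl q h1
        · rw [if_neg h1] at hq
          split at hq <;> omega
      · rw [hcval w, if_neg hwS, if_pos rfl]
    obtain ⟨jr, hjr⟩ := Fin.exists_succAbove_eq (Ne.symm hqsne)
    have hplt : plt (qs.removeNth y) (qs.removeNth c) := by
      refine Or.inr ⟨?_, s - 1, ?_, ?_⟩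
      · rw [rset_eq_empty_zero (qs.removeNth y) (fun q => hy1 _),
          rset_eq_empty_zero (qs.removeNth c)
            (fun q => by
              show 1 ≤ ((c (qs.succAbove q)) : ℕ)
              rw [hcval]; split <;> [omega; (split <;> omega)])]
      · refine binLT_of_witness (m := jr) ?_ ?_ ?_
        · rw [mem_rset]
          show (c (qs.succAbove jr) : ℕ) = s - 1
          rw [hjr, hcval j, if_neg hjx, if_neg hw.symm]
        · rw [mem_rset]
          show ¬ (y (qs.succAbove jr) : ℕ) = s - 1
          rw [hjr, hyj]
          omega
        · intro q hqX hqY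
          rw [mem_rset] at hqX hqY
          have hqX' : (y (qs.succAbove q) : ℕ) = s - 1 := hqX
          have hqj : qs.succAbove q ≠ j := by
            intro hc
            rw [hc, hyj] at hqX'
            omega
          have hxq : (x (qs.succAbove q) : ℕ) = s - 1 := by
            rw [← hyval _ hqj]; exact hqX'
          have hqw : qs.succAbove q = w := by
            by_contra hc
            apply hqY
            show (c (qs.succAbove q) : ℕ) = s - 1
            rw [hcval]
            rw [if_neg (by omega : ¬ (x (qs.succAbove q) : ℕ) = s), if_neg hc]
          rcases hwc with hlt | hdef
          · have : qs.succAbove q < qs.succAbove jr := by rw [hjr, hqw]; exact hlt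
            exact Fin.succAbove_lt_succAbove_iff.1 this
          · rw [hqw] at hxq
            omega
      · intro l hl
        rcases eq_or_lt_of_le (show s ≤ l by omega) with hsl | hls
        · subst hsl
          ext q
          rw [mem_rset, mem_rset]
          show (y (qs.succAbove q) : ℕ) = s ↔ (c (qs.succAbove q) : ℕ) = s
          rcases eq_or_ne (qs.succAbove q) j with hc | hc
          · rw [hc, hyj, hcval j, if_neg hjx, if_neg hw.symm]
            omega
          · rw [hyval _ hc, hcval]
            by_cases h1 : (x (qs.succAbove q) : ℕ) = s
            · rw [if_pos h1]
              simp [h1]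
            · rw [if_neg h1]
              split <;> omega
        · rw [rset_eq_empty_high (qs.removeNth y) (fun q => hyle _) hls,
            rset_eq_empty_high (qs.removeNth c) (fun q => by
              show ((c (qs.succAbove q)) : ℕ) ≤ s
              rw [hcval]; split <;> [omega; (split <;> omega)]) hls]
    have hyqs : y qs = x qs := hyval qs hqsne
    have hcqs : c qs = x qs := by rw [hcdef]; simp only [if_pos hqs]
    have hyy : qs.insertNth (x qs) (qs.removeNth y) = y := by
      rw [← hyqs, Fin.insertNth_self_removeNth]
    have hcc : qs.insertNth (x qs) (qs.removeNth c) = c := by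
      rw [← hcqs, Fin.insertNth_self_removeNth]
    rw [hydef] at hyy ⊢
    rw [← hyy]
    exact sliceLe hA qs (x qs) (by rw [hcc]; exact hcA) (Or.inr hplt)

lemma class_props {k N s : ℕ} {S : Finset (Fin N)} {x : Fin N → Fin (k + 1)}
    (hx : x ∈ classSet k N s 0 S) :
    (∀ q, 1 ≤ (x q : ℕ)) ∧ (∀ q, (x q : ℕ) ≤ s) ∧ (∀ q, (x q : ℕ) = s ↔ q ∈ S) := by
  simp only [classSet, Finset.mem_filter, Finset.mem_univ, true_and] at hx
  obtain ⟨hm, hr, hz⟩ := hx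
  have h0 : rset x 0 = ∅ := Finset.card_eq_zero.1 hz
  refine ⟨?_, ?_, ?_⟩
  · intro q
    have : q ∉ rset x 0 := h0 ▸ Finset.notMem_empty q
    rw [mem_rset] at this
    omega
  · intro q
    rw [← hm]
    exact Finset.le_sup (f := fun i => (x i : ℕ)) (Finset.mem_univ q)
  · intro q
    rw [← hr, mem_rset]

lemma push_shadow {k N : ℕ} (hk : 1 ≤ k) {A : Finset (Fin N → Fin (k + 1))}
    {x : Fin N → Fin (k + 1)} (i : Fin N) (hyA : Function.update x i 1 ∈ A) :
    Function.update x i 0 ∈ dShadow A := by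
  classical
  refine Finset.mem_biUnion.2 ⟨_, hyA, Finset.mem_image.2 ⟨i, Finset.mem_filter.2
    ⟨Finset.mem_univ _, ?_⟩, ?_⟩⟩
  · rw [Function.update_self]
    intro hc
    have := congrArg Fin.val hc
    rw [val_one_k hk] at this
    simpa using this
  · rw [Function.update_idem]

end Aux

lemma forceI_update {k n s : ℕ} {A : Finset (Fin (n + 1) → Fin (k + 1))} (hA : IsCompressed A)
    (hn : 1 ≤ n) (hs1 : 2 ≤ s) (hs2 : s ≤ k) {j : Fin (n + 1)}
    {a : Fin (n + 1) → Fin (k + 1)} (haA : a ∈ A)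
    (haj : (a j : ℕ) = s) (hale : ∀ q, (a q : ℕ) ≤ s) (ha1 : ∀ q, 1 ≤ (a q : ℕ))
    {x : Fin (n + 1) → Fin (k + 1)} (hx1 : ∀ q, 1 ≤ (x q : ℕ)) (hxle : ∀ q, (x q : ℕ) ≤ s)
    (hxcl : ∀ q, (x q : ℕ) = s → q < j) {i : Fin (n + 1)} (hij : i ≠ j) :
    Function.update x i 1 ∈ A := by
  classical
  have h1k : ((1 : Fin (k + 1)) : ℕ) = 1 := val_one_k (by omega)
  refine forceI hA hn hs1 hs2 haA haj hale ha1 ?_ ?_ ?_ hij ?_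
  · intro q
    rcases eq_or_ne q i with rfl | hq
    · rw [Function.update_self]; omega
    · rw [Function.update_of_ne hq]; exact hx1 q
  · intro q
    rcases eq_or_ne q i with rfl | hq
    · rw [Function.update_self]; omega
    · rw [Function.update_of_ne hq]; exact hxle q
  · intro q hq
    rcases eq_or_ne q i with rfl | hqi
    · rw [Function.update_self] at hq; omega
    · rw [Function.update_of_ne hqi] at hq; exact hxcl q hq
  · rw [Function.update_self]; exact h1k

/-- **Claim 14, second part.** -/
theorem claim14_second (k n s : ℕ) (hn : 2 ≤ n) (hs1 : 2 ≤ s) (hs2 : s ≤ k)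
    (A : Finset (Fin (n + 1) → Fin (k + 1))) (hA : IsCompressed A)
    (hlow : Bge k (n + 1) 1 ∪ (box k (n + 1) s ∩ Bexact k (n + 1) 0) ⊂ A)
    (hhigh : A ⊆ Bge k (n + 1) 1 ∪ (box k (n + 1) (s + 1) ∩ Bexact k (n + 1) 0))
    (j : Fin (n + 1)) (hj : j ≠ 0)
    (hT : (classSet k (n + 1) s 0 {j} ∩ A).Nonempty)
    (hTmax : ∀ S : Finset (Fin (n + 1)), S.Nonempty →
      (classSet k (n + 1) s 0 S ∩ A).Nonempty → S = {j} ∨ binLT S {j}) :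
    (∀ S : Finset (Fin (n + 1)), S.Nonempty →
      binLT S (Finset.univ.filter fun i => i < j) →
        dShadow (classSet k (n + 1) s 0 S) ⊆ dShadow A) ∧
    (∀ z ∈ dShadow (classSet k (n + 1) s 0 (Finset.univ.filter fun i => i < j)),
      z ≠ (fun i : Fin (n + 1) =>
          if i < j then (Fin.ofNat (k + 1) s)
          else if i = j then (0 : Fin (k + 1)) else (Fin.ofNat (k + 1) (s - 1))) →
        z ∈ dShadow A) := by
  classical
  obtain ⟨a, haMem⟩ := hT
  have haC := (Finset.mem_inter.1 haMem).1
  have haA := (Finset.mem_inter.1 haMem).2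
  obtain ⟨ha1, hale, haiff⟩ := class_props haC
  have haj : (a j : ℕ) = s := (haiff j).2 (Finset.mem_singleton_self j)
  have hn1 : 1 ≤ n := by omega
  have hk1 : 1 ≤ k := by omega
  constructor
  · -- first part
    intro S hS hSU z hz
    simp only [dShadow, Finset.mem_biUnion, Finset.mem_image, Finset.mem_filter,
      Finset.mem_univ, true_and] at hz
    obtain ⟨x, hxC, i, hxi, rfl⟩ := hz
    obtain ⟨hx1, hxle, hxiff⟩ := class_props hxC
    obtain ⟨m, hmU, hmS, hd⟩ := hSU
    have hmj : m < j := (Finset.mem_filter.1 hmU).2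
    have hsub : ∀ q ∈ S, q < j := by
      intro q hq
      by_contra hc
      have hqU : q ∉ Finset.univ.filter fun i => i < j := by
        simp only [Finset.mem_filter, Finset.mem_univ, true_and]
        exact hc
      exact hc ((hd q (Or.inl ⟨hq, hqU⟩)).trans_lt hmj)
    have hxcl : ∀ q, (x q : ℕ) = s → q < j := fun q hq => hsub q ((hxiff q).1 hq)
    refine push_shadow hk1 i ?_
    by_cases hij : i = j
    · subst hij
      obtain ⟨qs, hqsS⟩ := hS
      exact forceJ hA hn1 hs1 hs2 haA haj hale ha1 hx1 hxle hxcl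
        ((hxiff qs).2 hqsS) (ne_of_lt hmj) (fun hc => hmS ((hxiff m).1 hc)) (Or.inl hmj)
    · exact forceI_update hA hn1 hs1 hs2 haA haj hale ha1 hx1 hxle hxcl hij
  · -- second part
    intro z hz hzw
    simp only [dShadow, Finset.mem_biUnion, Finset.mem_image, Finset.mem_filter,
      Finset.mem_univ, true_and] at hz
    obtain ⟨x, hxC, i, hxi, rfl⟩ := hz
    obtain ⟨hx1, hxle, hxiff⟩ := class_props hxC
    have hxiff' : ∀ q, (x q : ℕ) = s ↔ q < j := by
      intro q
      exact (hxiff q).trans (by simp)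
    have hxcl : ∀ q, (x q : ℕ) = s → q < j := fun q h => (hxiff' q).1 h
    refine push_shadow hk1 i ?_
    by_cases hij : i = j
    · rw [hij]
      rw [hij] at hzw
      have hsk : ((Fin.ofNat (k + 1) s) : ℕ) = s := Nat.mod_eq_of_lt (by omega)
      have hs1k : ((Fin.ofNat (k + 1) (s - 1)) : ℕ) = s - 1 := Nat.mod_eq_of_lt (by omega)
      have hex : ∃ r, Function.update x j 0 r ≠
          (fun i : Fin (n + 1) =>
            if i < j then (Fin.ofNat (k + 1) s)
            else if i = j then (0 : Fin (k + 1)) else (Fin.ofNat (k + 1) (s - 1))) r := by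
        by_contra hc
        push_neg at hc
        exact hzw (funext hc)
      obtain ⟨r, hr⟩ := hex
      have hrj : r ≠ j := by
        rintro rfl
        apply hr
        show Function.update x r 0 r =
          if r < r then (Fin.ofNat (k + 1) s) else if r = r then 0 else (Fin.ofNat (k + 1) (s - 1))
        rw [Function.update_self, if_neg (lt_irrefl r), if_pos rfl]
      have hrlt : ¬ r < j := by
        intro hlt
        apply hr
        show Function.update x j 0 r =
          if r < j then (Fin.ofNat (k + 1) s) else if r = j then 0 else (Fin.ofNat (k + 1) (s - 1))
        rw [Function.update_of_ne hrj, if_pos hlt]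
        exact Fin.ext (by rw [hsk]; exact (hxiff' r).2 hlt)
      have hxr : (x r : ℕ) ≤ s - 2 := by
        have h2 : (x r : ℕ) ≠ s := fun hc => hrlt ((hxiff' r).1 hc)
        have h3 : (x r : ℕ) ≠ s - 1 := by
          intro hc
          apply hr
          show Function.update x j 0 r =
            if r < j then (Fin.ofNat (k + 1) s) else if r = j then 0 else (Fin.ofNat (k + 1) (s - 1))
          rw [Function.update_of_ne hrj, if_neg hrlt, if_neg hrj]
          exact Fin.ext (by rw [hs1k]; exact hc)
        have := hxle r
        omega
      have h0j : (0 : Fin (n + 1)) < j := (Fin.pos_iff_ne_zero' j).2 hj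
      exact forceJ hA hn1 hs1 hs2 haA haj hale ha1 hx1 hxle hxcl
        ((hxiff' 0).2 h0j) hrj (fun hc => hrlt ((hxiff' r).1 hc)) (Or.inr hxr)
    · exact forceI_update hA hn1 hs1 hs2 haA haj hale ha1 hx1 hxle hxcl hij
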